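/- Let r ∈ ℚ_{>0} \ ℕ with n(r) > 1 (so d(r) > 1 and S_r is atomic). Then for every nonzero x ∈ S_r admitting more than one factorization, Δ(x) = { |n(r) − d(r)| }, and consequently the delta set of the monoid satisfies Δ(S_r) = { |n(r) − d(r)| }. -/
import Mathlib


open Finsupp
open scoped ENNReal

/-- The Puiseux monoid (rational cyclic semiring) `S_r`, the additive submonoid of `ℚ`
generated by the nonnegative powers of `r`. -/
def S (r : ℚ) : AddSubmonoid ℚ := AddSubmonoid.closure {x : ℚ | ∃ n : ℕ, x = r ^ n}

/-- A factorization of `x` over the powers of `r`: a finitely supported choice of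
coefficients `α i` with `∑ α i * r ^ i = x`. -/
def IsFactorization (r x : ℚ) (α : ℕ →₀ ℕ) : Prop :=
  (α.sum fun i c => (c : ℚ) * r ^ i) = x

/-- The length of a factorization. -/
def flen (α : ℕ →₀ ℕ) : ℕ := α.sum fun _ c => c

/-- The set of lengths of factorizations of `x` over the powers of `r`. -/
def lengthSet (r x : ℚ) : Set ℕ :=
  {t | ∃ α : ℕ →₀ ℕ, IsFactorization r x α ∧ flen α = t}

/-- An atom of `S_r`: a nonzero element that is not the sum of two nonzero elements. -/
def IsAtomS (r a : ℚ) : Prop :=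
  a ∈ S r ∧ a ≠ 0 ∧ ¬ ∃ y z : ℚ, y ∈ S r ∧ z ∈ S r ∧ y ≠ 0 ∧ z ≠ 0 ∧ a = y + z

/-- The set of lengths of `x` as sums of atoms of `S_r`. -/
def atomLengthSet (r x : ℚ) : Set ℕ :=
  {t | ∃ f : Fin t → ℚ, (∀ i, IsAtomS r (f i)) ∧ ∑ i, f i = x}

/-- The delta set of `x` in `S_r`. -/
def deltaSet (r x : ℚ) : Set ℕ :=
  {e | 0 < e ∧ ∃ l ∈ lengthSet r x,
    lengthSet r x ∩ Set.Icc l (l + e) = {l, l + e}}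

namespace PuiseuxAux

open Finset

/-! ### Generic sum lemmas -/

lemma fact_sum_range {r : ℚ} {α : ℕ →₀ ℕ} {N : ℕ} (hN : α.support ⊆ Finset.range N) :
    (α.sum fun i c => (c : ℚ) * r ^ i) = ∑ i ∈ Finset.range N, (α i : ℚ) * r ^ i :=
  Finsupp.sum_of_support_subset _ hN _ (by simp)

lemma flen_sum_range {α : ℕ →₀ ℕ} {N : ℕ} (hN : α.support ⊆ Finset.range N) :
    flen α = ∑ i ∈ Finset.range N, α i :=
  Finsupp.sum_of_support_subset _ hN _ (by simp)

def Sval (r : ℚ) (α : ℕ →₀ ℕ) : ℚ := α.sum fun i c => (c : ℚ) * r ^ i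

lemma Sval_add (r : ℚ) (f g : ℕ →₀ ℕ) : Sval r (f + g) = Sval r f + Sval r g :=
  Finsupp.sum_add_index' (fun _ => by simp) (fun _ c₁ c₂ => by push_cast; ring)

lemma Sval_single (r : ℚ) (j b : ℕ) : Sval r (Finsupp.single j b) = (b : ℚ) * r ^ j :=
  Finsupp.sum_single_index (by simp)

lemma flen_add (f g : ℕ →₀ ℕ) : flen (f + g) = flen f + flen g :=
  Finsupp.sum_add_index' (fun _ => rfl) (fun _ _ _ => rfl)

lemma flen_single (j b : ℕ) : flen (Finsupp.single j b) = b :=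
  Finsupp.sum_single_index rfl

lemma step_general {r x : ℚ} {α : ℕ →₀ ℕ} {a b : ℕ} {j k : ℕ}
    (hrel : (a : ℚ) * r ^ k = (b : ℚ) * r ^ j)
    (hge : b ≤ α j) (hf : IsFactorization r x α) :
    ∃ β : ℕ →₀ ℕ, IsFactorization r x β ∧ flen β + b = flen α + a := by
  have hle : Finsupp.single j b ≤ α + Finsupp.single k a := by
    rw [Finsupp.single_le_iff]
    exact le_trans hge (by simp)
  have key : (α + Finsupp.single k a - Finsupp.single j b) + Finsupp.single j b
      = α + Finsupp.single k a := tsub_add_cancel_of_le hle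
  refine ⟨α + Finsupp.single k a - Finsupp.single j b, ?_, ?_⟩
  · have h2 := congrArg (Sval r) key
    rw [Sval_add, Sval_add, Sval_single, Sval_single] at h2
    have hfx : Sval r α = x := hf
    show Sval r _ = x
    linarith [h2]
  · have h2 := congrArg flen key
    rw [flen_add, flen_add, flen_single, flen_single] at h2
    omega

/-! ### Integer equation -/

lemma int_eq_of_rat_eq {r : ℚ} {a b : ℕ → ℕ} {M : ℕ}
    (h : ∑ i ∈ range (M + 1), (a i : ℚ) * r ^ i = ∑ i ∈ range (M + 1), (b i : ℚ) * r ^ i) :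
    ∑ i ∈ range (M + 1), (a i : ℤ) * r.num ^ i * (r.den : ℤ) ^ (M - i)
      = ∑ i ∈ range (M + 1), (b i : ℤ) * r.num ^ i * (r.den : ℤ) ^ (M - i) := by
  have hterm : ∀ (c : ℕ → ℕ), ∀ i ∈ range (M + 1),
      ((((c i : ℤ) * r.num ^ i * (r.den : ℤ) ^ (M - i)) : ℤ) : ℚ)
        = (c i : ℚ) * r ^ i * (r.den : ℚ) ^ M := by
    intro c i hi
    have hiM : i ≤ M := Nat.lt_succ_iff.mp (mem_range.mp hi)
    have hnum : ((r.num : ℚ)) = r * (r.den : ℚ) := (Rat.mul_den_eq_num r).symm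
    have hp : (r.den : ℚ) ^ i * (r.den : ℚ) ^ (M - i) = (r.den : ℚ) ^ M := by
      rw [← pow_add, Nat.add_sub_cancel' hiM]
    push_cast
    rw [hnum, mul_pow, ← hp]
    ring
  have h2 := congrArg (fun y : ℚ => y * (r.den : ℚ) ^ M) h
  simp only [Finset.sum_mul] at h2
  have hA : ((∑ i ∈ range (M + 1), (a i : ℤ) * r.num ^ i * (r.den : ℤ) ^ (M - i) : ℤ) : ℚ)
      = ((∑ i ∈ range (M + 1), (b i : ℤ) * r.num ^ i * (r.den : ℤ) ^ (M - i) : ℤ) : ℚ) := by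
    rw [Int.cast_sum, Int.cast_sum, sum_congr rfl (hterm a), sum_congr rfl (hterm b)]
    exact h2
  exact_mod_cast hA

lemma cop_den_num {r : ℚ} : IsCoprime (r.den : ℤ) r.num := by
  rw [Int.isCoprime_iff_gcd_eq_one]
  simpa [Int.gcd, Int.natAbs_natCast] using (Nat.Coprime.symm r.reduced)

lemma dvd_weight {r : ℚ} (a : ℕ → ℕ) (M : ℕ) :
    (r.num - (r.den : ℤ)) ∣
      (∑ i ∈ range (M + 1), (a i : ℤ) * r.num ^ i * (r.den : ℤ) ^ (M - i))
        - (r.den : ℤ) ^ M * (∑ i ∈ range (M + 1), (a i : ℤ)) := by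
  rw [Finset.mul_sum, ← sum_sub_distrib]
  refine dvd_sum fun i hi => ?_
  have hiM : i ≤ M := Nat.lt_succ_iff.mp (mem_range.mp hi)
  have hp : (r.den : ℤ) ^ i * (r.den : ℤ) ^ (M - i) = (r.den : ℤ) ^ M := by
    rw [← pow_add, Nat.add_sub_cancel' hiM]
  have heq : (a i : ℤ) * r.num ^ i * (r.den : ℤ) ^ (M - i) - (r.den : ℤ) ^ M * (a i : ℤ)
      = ((r.num ^ i - (r.den : ℤ) ^ i) * ((a i : ℤ) * (r.den : ℤ) ^ (M - i))) := by
    rw [← hp]; ring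
  rw [heq]
  exact Dvd.dvd.mul_right (sub_dvd_pow_sub_pow _ _ i) _

lemma len_congr_aux {r : ℚ} {a b : ℕ → ℕ} {M : ℕ}
    (h : ∑ i ∈ range (M + 1), (a i : ℚ) * r ^ i = ∑ i ∈ range (M + 1), (b i : ℚ) * r ^ i) :
    (r.num - (r.den : ℤ)) ∣
      (∑ i ∈ range (M + 1), (a i : ℤ)) - (∑ i ∈ range (M + 1), (b i : ℤ)) := by
  have hi := int_eq_of_rat_eq h
  have h1 := dvd_weight (r := r) a M
  have h2 := dvd_weight (r := r) b M
  have key : (r.den : ℤ) ^ M * ((∑ i ∈ range (M + 1), (a i : ℤ)) - (∑ i ∈ range (M + 1), (b i : ℤ)))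
      = ((∑ i ∈ range (M + 1), (b i : ℤ) * r.num ^ i * (r.den : ℤ) ^ (M - i))
          - (r.den : ℤ) ^ M * (∑ i ∈ range (M + 1), (b i : ℤ)))
        - ((∑ i ∈ range (M + 1), (a i : ℤ) * r.num ^ i * (r.den : ℤ) ^ (M - i))
          - (r.den : ℤ) ^ M * (∑ i ∈ range (M + 1), (a i : ℤ))) := by
    rw [hi]; ring
  have h3 : (r.num - (r.den : ℤ)) ∣
      (r.den : ℤ) ^ M * ((∑ i ∈ range (M + 1), (a i : ℤ)) - (∑ i ∈ range (M + 1), (b i : ℤ))) := by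
    rw [key]; exact dvd_sub h2 h1
  have h4 : IsCoprime ((r.den : ℤ)) (r.num - (r.den : ℤ)) := by
    have := (cop_den_num (r := r)).add_mul_left_right (-1)
    simpa [mul_neg_one, ← sub_eq_add_neg] using this
  exact ((h4.pow_left).symm).dvd_of_dvd_mul_left h3

lemma int_abs_small {c : ℤ} {d : ℕ} (h : (d:ℤ) ∣ c) (h1 : -(d:ℤ) < c) (h2 : c < d) : c = 0 := by
  rcases h with ⟨k, rfl⟩
  rcases lt_trichotomy k 0 with hk | hk | hk
  · nlinarith
  · simp [hk]
  · nlinarith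

lemma unique_aux {r : ℚ} :
    ∀ (N : ℕ) (a b : ℕ → ℕ), (∀ j, 1 ≤ j → a j < r.den) → (∀ j, 1 ≤ j → b j < r.den) →
      (∑ i ∈ range N, (a i : ℚ) * r ^ i = ∑ i ∈ range N, (b i : ℚ) * r ^ i) →
      ∀ i < N, a i = b i := by
  intro N
  induction N with
  | zero => intro a b _ _ _ i hi; omega
  | succ M IH =>
    intro a b ha hb h i hi
    have htop : a M = b M := by
      rcases Nat.eq_zero_or_pos M with hM | hM
      · subst hM
        simp only [zero_add, range_one, sum_singleton, pow_zero, mul_one, Nat.cast_inj] at h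
        exact_mod_cast h
      · have hint := int_eq_of_rat_eq h
        rw [sum_range_succ, sum_range_succ] at hint
        have hdvd : ∀ c : ℕ → ℕ, (r.den : ℤ) ∣
            ∑ i ∈ range M, (c i : ℤ) * r.num ^ i * (r.den : ℤ) ^ (M - i) := by
          intro c
          refine dvd_sum fun i hi2 => ?_
          have : M - i ≠ 0 := by have := mem_range.mp hi2; omega
          exact Dvd.dvd.mul_left (dvd_pow_self _ this) _
        have hMM : M - M = 0 := Nat.sub_self M
        rw [hMM, pow_zero, mul_one, mul_one] at hint
        have hd2 : (r.den : ℤ) ∣ ((a M : ℤ) - b M) * r.num ^ M := by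
          have heq2 : ((a M : ℤ) - (b M : ℤ)) * r.num ^ M
              = (∑ i ∈ range M, (b i : ℤ) * r.num ^ i * (r.den : ℤ) ^ (M - i))
                - (∑ i ∈ range M, (a i : ℤ) * r.num ^ i * (r.den : ℤ) ^ (M - i)) := by
            linarith [hint]
          rw [heq2]
          exact dvd_sub (hdvd b) (hdvd a)
        have hd3 : (r.den : ℤ) ∣ ((a M : ℤ) - b M) :=
          (cop_den_num.pow_right).dvd_of_dvd_mul_right hd2
        have haM := ha M hM
        have hbM := hb M hM
        have : ((a M : ℤ) - b M) = 0 := int_abs_small hd3 (by omega) (by omega)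
        omega
    rcases Nat.lt_succ_iff_lt_or_eq.mp hi with hiM | hieq
    · rw [sum_range_succ, sum_range_succ, htop] at h
      have h' := add_right_cancel h
      exact IH a b ha hb h' i hiM
    · rw [hieq]; exact htop

end PuiseuxAux
namespace PuiseuxAux
open Finset

variable {r x : ℚ} {α β : ℕ →₀ ℕ}

lemma exists_common_range (α β : ℕ →₀ ℕ) :
    ∃ M : ℕ, α.support ⊆ Finset.range (M + 1) ∧ β.support ⊆ Finset.range (M + 1) := by
  obtain ⟨N, hN⟩ := (α.support ∪ β.support).exists_nat_subset_range
  refine ⟨N, ?_, ?_⟩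
  · exact subset_trans (subset_trans subset_union_left hN) (range_subset_range.mpr (by omega))
  · exact subset_trans (subset_trans subset_union_right hN) (range_subset_range.mpr (by omega))

lemma rat_eq_of_common (hα : IsFactorization r x α) (hβ : IsFactorization r x β)
    {M : ℕ} (h1 : α.support ⊆ Finset.range (M + 1)) (h2 : β.support ⊆ Finset.range (M + 1)) :
    ∑ i ∈ range (M + 1), (α i : ℚ) * r ^ i = ∑ i ∈ range (M + 1), (β i : ℚ) * r ^ i := by
  rw [← fact_sum_range h1, ← fact_sum_range h2]
  unfold IsFactorization at hα hβ
  rw [hα, hβ]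

lemma len_congr (hα : IsFactorization r x α) (hβ : IsFactorization r x β) :
    (r.num - (r.den : ℤ)) ∣ (flen α : ℤ) - (flen β : ℤ) := by
  obtain ⟨M, h1, h2⟩ := exists_common_range α β
  have hq := rat_eq_of_common hα hβ h1 h2
  have hdvd := len_congr_aux (a := fun i => α i) (b := fun i => β i) hq
  have e1 : (flen α : ℤ) = ∑ i ∈ range (M + 1), (α i : ℤ) := by
    rw [flen_sum_range h1]; push_cast; rfl
  have e2 : (flen β : ℤ) = ∑ i ∈ range (M + 1), (β i : ℤ) := by
    rw [flen_sum_range h2]; push_cast; rfl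
  rw [e1, e2]; exact hdvd

def Canon (r : ℚ) (α : ℕ →₀ ℕ) : Prop := ∀ j, 1 ≤ j → α j < r.den

lemma canon_unique (hα : IsFactorization r x α) (hβ : IsFactorization r x β)
    (ha : Canon r α) (hb : Canon r β) : α = β := by
  obtain ⟨M, h1, h2⟩ := exists_common_range α β
  have hq := rat_eq_of_common hα hβ h1 h2
  have key := unique_aux (M + 1) (fun i => α i) (fun i => β i) ha hb hq
  ext j
  by_cases hj : j < M + 1
  · exact key j hj
  · have hj1 : α j = 0 := Finsupp.notMem_support_iff.mp
      (fun hmem => hj (mem_range.mp (h1 hmem)))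
    have hj2 : β j = 0 := Finsupp.notMem_support_iff.mp
      (fun hmem => hj (mem_range.mp (h2 hmem)))
    rw [hj1, hj2]

variable (hn : 1 < r.num) (hd : r.den ≠ 1)

lemma num_toNat (hn : 1 < r.num) : ((r.num.toNat : ℤ)) = r.num :=
  Int.toNat_of_nonneg (by omega)

lemma hdr (hn : 1 < r.num) : (r.den : ℚ) * r = (r.num.toNat : ℚ) := by
  have h1 : ((r.num.toNat : ℤ) : ℚ) = ((r.num : ℤ) : ℚ) := by rw [num_toNat hn]
  have h2 : ((r.num.toNat : ℚ)) = ((r.num.toNat : ℤ) : ℚ) := by push_cast; ring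
  rw [h2, h1, ← Rat.mul_den_eq_num r]; ring

lemma rel_down (hn : 1 < r.num) {j : ℕ} (hj : 1 ≤ j) :
    (r.num.toNat : ℚ) * r ^ (j - 1) = (r.den : ℚ) * r ^ j := by
  obtain ⟨k, rfl⟩ : ∃ k, j = k + 1 := ⟨j - 1, by omega⟩
  simp only [Nat.add_sub_cancel]
  rw [pow_succ, ← mul_assoc, ← hdr hn]
  ring

lemma stepDown (hn : 1 < r.num) (hf : IsFactorization r x α) {j : ℕ} (hj : 1 ≤ j)
    (hge : r.den ≤ α j) :
    ∃ β, IsFactorization r x β ∧ flen β + r.den = flen α + r.num.toNat :=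
  step_general (rel_down hn hj) hge hf

lemma one_le_r (hn : 1 < r.num) (hgt : r.den < r.num.toNat) : 1 ≤ r := by
  have h1 := hdr hn
  have h2 : (r.den : ℚ) < (r.num.toNat : ℚ) := by exact_mod_cast hgt
  have h3 : (0 : ℚ) < (r.den : ℚ) := by
    have := r.den_pos; exact_mod_cast this
  nlinarith

lemma flen_le_floor (hn : 1 < r.num) (hgt : r.den < r.num.toNat)
    (hf : IsFactorization r x α) : flen α ≤ ⌊x⌋₊ := by
  apply Nat.le_floor
  have h1 : (flen α : ℚ) = ∑ i ∈ α.support, (α i : ℚ) := by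
    unfold flen Finsupp.sum; push_cast; rfl
  have h2 : x = ∑ i ∈ α.support, (α i : ℚ) * r ^ i := by rw [← hf]; rfl
  rw [h1, h2]
  refine Finset.sum_le_sum fun i _ => ?_
  exact le_mul_of_one_le_right (Nat.cast_nonneg _) (one_le_pow₀ (one_le_r hn hgt))

lemma canon_max (hn : 1 < r.num) (hgt : r.den < r.num.toNat)
    (hαf : IsFactorization r x α) (hc : Canon r α)
    (hβf : IsFactorization r x β) : flen β ≤ flen α := by
  suffices H : ∀ (k : ℕ) (β : ℕ →₀ ℕ), IsFactorization r x β → ⌊x⌋₊ - flen β = k →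
      flen β ≤ flen α from H _ β hβf rfl
  intro k
  induction k using Nat.strong_induction_on with
  | _ k IH =>
    intro β hβ hk
    by_cases hcase : ∃ j, 1 ≤ j ∧ r.den ≤ β j
    · obtain ⟨j, hj1, hj2⟩ := hcase
      obtain ⟨γ, hγ, hlen⟩ := stepDown hn hβ hj1 hj2
      have hb1 : flen γ ≤ ⌊x⌋₊ := flen_le_floor hn hgt hγ
      have hb2 : flen β < flen γ := by omega
      have := IH (⌊x⌋₊ - flen γ) (by omega) γ hγ rfl
      omega
    · push_neg at hcase
      have : β = α := canon_unique hβ hαf (fun j hj => hcase j hj) hc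
      rw [this]

lemma canon_min (hn : 1 < r.num) (hlt : r.num.toNat < r.den)
    (hαf : IsFactorization r x α) (hc : Canon r α)
    (hβf : IsFactorization r x β) : flen α ≤ flen β := by
  suffices H : ∀ (k : ℕ) (β : ℕ →₀ ℕ), IsFactorization r x β → flen β = k →
      flen α ≤ flen β from H _ β hβf rfl
  intro k
  induction k using Nat.strong_induction_on with
  | _ k IH =>
    intro β hβ hk
    by_cases hcase : ∃ j, 1 ≤ j ∧ r.den ≤ β j
    · obtain ⟨j, hj1, hj2⟩ := hcase
      obtain ⟨γ, hγ, hlen⟩ := stepDown hn hβ hj1 hj2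
      have hb2 : flen γ < flen β := by omega
      have := IH (flen γ) (by omega) γ hγ rfl
      omega
    · push_neg at hcase
      have : β = α := canon_unique hβ hαf (fun j hj => hcase j hj) hc
      rw [this]

end PuiseuxAux
namespace PuiseuxAux
open Finset

variable {r x : ℚ} {ℓ₁ ℓ₂ : ℕ}

lemma num_ne_den (hd : r.den ≠ 1) : r.num ≠ (r.den : ℤ) := by
  intro heq
  have hr1 : r = 1 := by
    have h1 : r = ((r.num : ℚ)) / ((r.den : ℚ)) := (Rat.num_div_den r).symm
    rw [heq] at h1
    have hdz : ((r.den : ℚ)) ≠ 0 := by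
      have := r.den_pos; positivity
    rw [h1]
    push_cast
    field_simp
  exact hd (by rw [hr1]; rfl)

lemma toNat_ne (hn : 1 < r.num) (hd : r.den ≠ 1) : r.num.toNat ≠ r.den := by
  have h1 := num_toNat (r := r) hn
  have h2 := num_ne_den (r := r) hd
  omega

/-- `δ`, the natAbs of num minus den. -/
lemma dl_pos (hn : 1 < r.num) (hd : r.den ≠ 1) : 0 < (r.num - (r.den : ℤ)).natAbs := by
  have := num_ne_den (r := r) hd
  omega

lemma dl_gt (hgt : r.den < r.num.toNat) (hn : 1 < r.num) :
    (r.num - (r.den : ℤ)).natAbs = r.num.toNat - r.den := by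
  have := num_toNat (r := r) hn
  omega

lemma dl_lt (hlt : r.num.toNat < r.den) (hn : 1 < r.num) :
    (r.num - (r.den : ℤ)).natAbs = r.den - r.num.toNat := by
  have := num_toNat (r := r) hn
  omega

lemma len_congr_nat (ha : ℓ₁ ∈ lengthSet r x) (hb : ℓ₂ ∈ lengthSet r x) :
    ((r.num - (r.den : ℤ)).natAbs : ℤ) ∣ (ℓ₁ : ℤ) - (ℓ₂ : ℤ) := by
  obtain ⟨α, hαf, hα⟩ := ha
  obtain ⟨β, hβf, hβ⟩ := hb
  rw [← hα, ← hβ]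
  exact Int.natAbs_dvd.mpr (len_congr hαf hβf)

lemma lt_step_gt (hn : 1 < r.num) (hgt : r.den < r.num.toNat)
    (h1 : ℓ₁ ∈ lengthSet r x) (h2 : ℓ₂ ∈ lengthSet r x) (hlt : ℓ₁ < ℓ₂) :
    ℓ₁ + (r.num.toNat - r.den) ∈ lengthSet r x := by
  obtain ⟨α, hαf, hα⟩ := h1
  obtain ⟨β, hβf, hβ⟩ := h2
  by_cases hcase : ∃ j, 1 ≤ j ∧ r.den ≤ α j
  · obtain ⟨j, hj1, hj2⟩ := hcase
    obtain ⟨γ, hγ, hlen⟩ := stepDown hn hαf hj1 hj2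
    exact ⟨γ, hγ, by omega⟩
  · push_neg at hcase
    have := canon_max hn hgt hαf (fun j hj => hcase j hj) hβf
    omega

lemma gt_step_lt (hn : 1 < r.num) (hlt : r.num.toNat < r.den)
    (h1 : ℓ₁ ∈ lengthSet r x) (h2 : ℓ₂ ∈ lengthSet r x) (h : ℓ₁ < ℓ₂) :
    ℓ₂ - (r.den - r.num.toNat) ∈ lengthSet r x := by
  obtain ⟨α, hαf, hα⟩ := h1
  obtain ⟨β, hβf, hβ⟩ := h2
  by_cases hcase : ∃ j, 1 ≤ j ∧ r.den ≤ β j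
  · obtain ⟨j, hj1, hj2⟩ := hcase
    obtain ⟨γ, hγ, hlen⟩ := stepDown hn hβf hj1 hj2
    exact ⟨γ, hγ, by omega⟩
  · push_neg at hcase
    have := canon_min hn hlt hβf (fun j hj => hcase j hj) hαf
    omega

lemma dvd_interval {d : ℕ} (hpos : 0 < d) {c : ℤ} (hd : (d : ℤ) ∣ c)
    (h0 : 0 ≤ c) (h1 : c ≤ d) : c = 0 ∨ c = d := by
  rcases hd with ⟨k, rfl⟩
  have hd0 : (0 : ℤ) < (d : ℤ) := by exact_mod_cast hpos
  rcases lt_trichotomy k 0 with hk | hk | hk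
  · nlinarith
  · left; rw [hk]; ring
  · right
    have hk1 : k = 1 := by nlinarith
    rw [hk1]; ring

lemma pair_delta (hn : 1 < r.num) (hd : r.den ≠ 1) {l : ℕ}
    (hl : l ∈ lengthSet r x) (hl2 : l + (r.num - (r.den : ℤ)).natAbs ∈ lengthSet r x) :
    (r.num - (r.den : ℤ)).natAbs ∈ deltaSet r x := by
  set d := (r.num - (r.den : ℤ)).natAbs with hdl
  refine ⟨dl_pos hn hd, l, hl, ?_⟩
  ext m
  simp only [Set.mem_inter_iff, Set.mem_Icc, Set.mem_insert_iff, Set.mem_singleton_iff]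
  constructor
  · rintro ⟨hm, hm1, hm2⟩
    have hdvd := len_congr_nat hm hl
    rw [← hdl] at hdvd
    have h0 : (0 : ℤ) ≤ (m : ℤ) - l := by omega
    have h1 : (m : ℤ) - l ≤ (d : ℤ) := by omega
    rcases dvd_interval (dl_pos hn hd) hdvd h0 h1 with h | h
    · left; omega
    · right; omega
  · rintro (rfl | rfl)
    · exact ⟨hl, le_refl _, by omega⟩
    · exact ⟨hl2, by omega, le_refl _⟩

lemma delta_sub (hn : 1 < r.num) (hd : r.den ≠ 1) (x : ℚ) :
    deltaSet r x ⊆ {(r.num - (r.den : ℤ)).natAbs} := by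
  set d := (r.num - (r.den : ℤ)).natAbs with hdl
  rintro e ⟨he, l, hl, hset⟩
  have hmem : l + e ∈ lengthSet r x := by
    have h1 : l + e ∈ ({l, l + e} : Set ℕ) := by right; rfl
    rw [← hset] at h1
    exact h1.1
  have hdvd : (d : ℤ) ∣ (e : ℤ) := by
    have := len_congr_nat hmem hl
    rw [← hdl] at this
    have he2 : ((l + e : ℕ) : ℤ) - (l : ℤ) = (e : ℤ) := by push_cast; ring
    rwa [he2] at this
  have hdle : d ∣ e := Int.ofNat_dvd.mp (by exact_mod_cast hdvd)
  simp only [Set.mem_singleton_iff]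
  by_contra hne2
  have h2dl : 2 * d ≤ e := by
    rcases hdle with ⟨k, rfl⟩
    have hdp : 0 < d := dl_pos hn hd
    have hk : k ≠ 0 ∧ k ≠ 1 := by constructor <;> rintro rfl <;> omega
    have : 2 ≤ k := by omega
    calc 2 * d = d * 2 := by ring
    _ ≤ d * k := Nat.mul_le_mul_left d this
  have hdp : 0 < d := dl_pos hn hd
  have hne3 := toNat_ne (r := r) hn hd
  rcases Nat.lt_or_ge r.den r.num.toNat with hgt | hge
  · -- case den < num
    have hm : l + (r.num.toNat - r.den) ∈ lengthSet r x :=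
      lt_step_gt hn hgt hl hmem (by omega)
    have hdeq : r.num.toNat - r.den = d := (dl_gt hgt hn).symm
    rw [hdeq] at hm
    have hmm : l + d ∈ lengthSet r x ∩ Set.Icc l (l + e) := ⟨hm, by omega, by omega⟩
    rw [hset] at hmm
    simp only [Set.mem_insert_iff, Set.mem_singleton_iff] at hmm
    omega
  · have hlt : r.num.toNat < r.den := by omega
    have hm : (l + e) - (r.den - r.num.toNat) ∈ lengthSet r x :=
      gt_step_lt hn hlt hl hmem (by omega)
    have hdeq : r.den - r.num.toNat = d := (dl_lt hlt hn).symm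
    rw [hdeq] at hm
    have hmm : (l + e) - d ∈ lengthSet r x ∩ Set.Icc l (l + e) := ⟨hm, by omega, by omega⟩
    rw [hset] at hmm
    simp only [Set.mem_insert_iff, Set.mem_singleton_iff] at hmm
    omega

lemma delta_mem_of_two (hn : 1 < r.num) (hd : r.den ≠ 1)
    (h1 : ℓ₁ ∈ lengthSet r x) (h2 : ℓ₂ ∈ lengthSet r x) (hlt : ℓ₁ < ℓ₂) :
    (r.num - (r.den : ℤ)).natAbs ∈ deltaSet r x := by
  set d := (r.num - (r.den : ℤ)).natAbs with hdl
  have hdp : 0 < d := dl_pos hn hd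
  have hne3 := toNat_ne (r := r) hn hd
  have hdvd : (d : ℤ) ∣ (ℓ₂ : ℤ) - (ℓ₁ : ℤ) := by
    have := len_congr_nat h2 h1; rwa [← hdl] at this
  have hdle : d ≤ ℓ₂ - ℓ₁ := by
    have := Int.le_of_dvd (by omega) hdvd
    omega
  rcases Nat.lt_or_ge r.den r.num.toNat with hgt | hge
  · have hm := lt_step_gt hn hgt h1 h2 hlt
    have hdeq : r.num.toNat - r.den = d := (dl_gt hgt hn).symm
    rw [hdeq] at hm
    exact pair_delta hn hd h1 hm
  · have hltc : r.num.toNat < r.den := by omega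
    have hm := gt_step_lt hn hltc h1 h2 hlt
    have hdeq : r.den - r.num.toNat = d := (dl_lt hltc hn).symm
    rw [hdeq] at hm
    have heq2 : ℓ₂ - d + d = ℓ₂ := by omega
    have := pair_delta hn hd hm (by rw [heq2]; exact h2)
    exact this

end PuiseuxAux
namespace PuiseuxAux
open Finset

variable {r x : ℚ}

lemma two_lengths (hn : 1 < r.num) (hd : r.den ≠ 1)
    (hex : ∃ α β : ℕ →₀ ℕ, IsFactorization r x α ∧ IsFactorization r x β ∧ α ≠ β) :
    ∃ ℓ₁ ℓ₂ : ℕ, ℓ₁ ∈ lengthSet r x ∧ ℓ₂ ∈ lengthSet r x ∧ ℓ₁ < ℓ₂ := by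
  obtain ⟨α, β, hαf, hβf, hab⟩ := hex
  have hne3 := toNat_ne (r := r) hn hd
  have key : ∀ γ : ℕ →₀ ℕ, IsFactorization r x γ → (∃ j, 1 ≤ j ∧ r.den ≤ γ j) →
      ∃ ℓ₁ ℓ₂ : ℕ, ℓ₁ ∈ lengthSet r x ∧ ℓ₂ ∈ lengthSet r x ∧ ℓ₁ < ℓ₂ := by
    intro γ hγf ⟨j, hj1, hj2⟩
    obtain ⟨γ', hγ', hlen⟩ := stepDown hn hγf hj1 hj2
    have hm1 : flen γ ∈ lengthSet r x := ⟨γ, hγf, rfl⟩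
    have hm2 : flen γ' ∈ lengthSet r x := ⟨γ', hγ', rfl⟩
    rcases Nat.lt_or_ge (flen γ) (flen γ') with h | h
    · exact ⟨flen γ, flen γ', hm1, hm2, h⟩
    · exact ⟨flen γ', flen γ, hm2, hm1, by omega⟩
  by_cases hcα : ∃ j, 1 ≤ j ∧ r.den ≤ α j
  · exact key α hαf hcα
  by_cases hcβ : ∃ j, 1 ≤ j ∧ r.den ≤ β j
  · exact key β hβf hcβ
  push_neg at hcα hcβ
  exact absurd (canon_unique hαf hβf (fun j hj => hcα j hj) (fun j hj => hcβ j hj)) hab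

lemma x0_mem (hn : 1 < r.num) : ((r.num : ℚ)) ∈ S r := by
  have h1 : (1 : ℚ) ∈ S r := AddSubmonoid.subset_closure ⟨0, (pow_zero r).symm⟩
  have h2 : (r.num.toNat • (1 : ℚ)) ∈ S r := AddSubmonoid.nsmul_mem _ h1 _
  have h3 : (r.num.toNat • (1 : ℚ)) = ((r.num : ℚ)) := by
    have := num_toNat (r := r) hn
    rw [nsmul_eq_mul, mul_one]
    exact_mod_cast congrArg (fun z : ℤ => (z : ℚ)) this
  rwa [h3] at h2

lemma fact_single_zero (hn : 1 < r.num) :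
    IsFactorization r ((r.num : ℚ)) (Finsupp.single 0 r.num.toNat) := by
  show Sval r _ = _
  rw [Sval_single, pow_zero, mul_one]
  have := num_toNat (r := r) hn
  exact_mod_cast congrArg (fun z : ℤ => (z : ℚ)) this

lemma fact_single_one (hn : 1 < r.num) :
    IsFactorization r ((r.num : ℚ)) (Finsupp.single 1 r.den) := by
  show Sval r _ = _
  rw [Sval_single, pow_one, hdr hn]
  have := num_toNat (r := r) hn
  exact_mod_cast congrArg (fun z : ℤ => (z : ℚ)) this

end PuiseuxAux

open PuiseuxAux in
theorem stmt3 (r : ℚ) (h0 : 0 < r) (hd : r.den ≠ 1) (hn : 1 < r.num) :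
    (∀ x ∈ S r, x ≠ 0 →
      (∃ α β : ℕ →₀ ℕ, IsFactorization r x α ∧ IsFactorization r x β ∧ α ≠ β) →
      deltaSet r x = {(r.num - (r.den : ℤ)).natAbs}) ∧
    (⋃ x ∈ {x : ℚ | x ∈ S r ∧ x ≠ 0}, deltaSet r x) = {(r.num - (r.den : ℤ)).natAbs} := by
  constructor
  · intro x _ _ hex
    apply Set.Subset.antisymm (delta_sub hn hd x)
    rw [Set.singleton_subset_iff]
    obtain ⟨ℓ₁, ℓ₂, h1, h2, hlt⟩ := two_lengths hn hd hex
    exact delta_mem_of_two hn hd h1 h2 hlt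
  · apply Set.Subset.antisymm
    · exact Set.iUnion₂_subset fun x _ => delta_sub hn hd x
    · rw [Set.singleton_subset_iff]
      have hx0mem : ((r.num : ℚ)) ∈ {x : ℚ | x ∈ S r ∧ x ≠ 0} := by
        refine ⟨x0_mem hn, ?_⟩
        have : (0 : ℤ) < r.num := by omega
        simp only [ne_eq, Int.cast_eq_zero]
        omega
      refine Set.mem_biUnion hx0mem ?_
      have hm1 : r.num.toNat ∈ lengthSet r ((r.num : ℚ)) :=
        ⟨Finsupp.single 0 r.num.toNat, fact_single_zero hn, flen_single _ _⟩
      have hm2 : r.den ∈ lengthSet r ((r.num : ℚ)) :=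
        ⟨Finsupp.single 1 r.den, fact_single_one hn, flen_single _ _⟩
      have hne3 := toNat_ne (r := r) hn hd
      rcases Nat.lt_or_ge r.num.toNat r.den with h | h
      · exact delta_mem_of_two hn hd hm1 hm2 h
      · exact delta_mem_of_two hn hd hm2 hm1 (by omega)
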